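/- Let p be a prime, let φ, ψ : ZMod p → ZMod p be bijections, let α ∈ ZMod p with α ≠ 0, and let i₀, i₁, j₀, j₁ ∈ ZMod p with (i₀, j₀) ≠ (i₁, j₁). Then it is not the case that both α·((φ(i₀) − φ(i₁)) + (ψ(j₀) − ψ(j₁))) = 0 and α·(φ(i₀) − φ(i₁)) = 0 hold in ZMod p. -/
import Mathlib

/-- The arithmetic core of Lemma 3: for a prime `p`, bijections `φ, ψ` on `ZMod p`,
a nonzero `α` and distinct block-column indices `(i₀, j₀) ≠ (i₁, j₁)`, the two
4-cycle equations cannot hold simultaneously. -/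
theorem stmt_3 (p : ℕ) [Fact p.Prime] (φ ψ : ZMod p → ZMod p)
    (hφ : Function.Bijective φ) (hψ : Function.Bijective ψ)
    (α : ZMod p) (hα : α ≠ 0)
    (i₀ i₁ j₀ j₁ : ZMod p) (hij : (i₀, j₀) ≠ (i₁, j₁)) :
    ¬ (α * ((φ i₀ - φ i₁) + (ψ j₀ - ψ j₁)) = 0 ∧ α * (φ i₀ - φ i₁) = 0) := by
  rintro ⟨h1, h2⟩
  have hφ0 : φ i₀ - φ i₁ = 0 := by
    rcases mul_eq_zero.mp h2 with h | h
    · exact absurd h hα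
    · exact h
  have hψ0 : ψ j₀ - ψ j₁ = 0 := by
    rw [hφ0, zero_add] at h1
    rcases mul_eq_zero.mp h1 with h | h
    · exact absurd h hα
    · exact h
  have hi : i₀ = i₁ := hφ.injective (sub_eq_zero.mp hφ0)
  have hj : j₀ = j₁ := hψ.injective (sub_eq_zero.mp hψ0)
  exact hij (by rw [hi, hj])
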